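/- Let n ≥ 1, let λ : Fin n → ℝ satisfy λᵢ > 0 for all i, let c̄ : Fin n → ℝ with nonempty support S := {i : c̄ᵢ ≠ 0}, and define f(β) := −β − Σ_{i ∈ S} c̄ᵢ² λᵢ β/(λᵢ β − 1) and f''(β) := −2 Σ_{i ∈ S} c̄ᵢ² λᵢ²/(λᵢ β − 1)³, with λ_min := min_i λᵢ. Let 1/λ_min < l ≤ u and suppose β* ∈ [l,u] is a maximizer of f over (1/λ_min, ∞). Then for every β ∈ [l,u]: f(β) ≤ f(β*) ≤ f(β) − (f''(l)/2)·(u − l)². -/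

import Mathlib

open Matrix

noncomputable section

/-- The minimum of the eigenvalues `λ i`, for `n ≥ 1`. -/
def lamMin {n : ℕ} (hn : 1 ≤ n) (lam : Fin n → ℝ) : ℝ :=
  Finset.univ.inf' ⟨⟨0, hn⟩, Finset.mem_univ _⟩ lam

open Classical in
/-- The dual function `f(β) = −β − Σ_{i ∈ S} c̄ᵢ² λᵢβ/(λᵢβ−1)`, where `S` is the
support of `c̄`. -/
def ellFun {n : ℕ} (lam cbar : Fin n → ℝ) (β : ℝ) : ℝ :=
  -β - ∑ i ∈ Finset.univ.filter (fun i => cbar i ≠ 0),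
    (cbar i) ^ 2 * (lam i * β / (lam i * β - 1))

open Classical in
/-- Its second derivative `f''(β) = −2 Σ_{i ∈ S} c̄ᵢ² λᵢ²/(λᵢβ−1)³` on `(1/λ_min, ∞)`. -/
def ellFun'' {n : ℕ} (lam cbar : Fin n → ℝ) (β : ℝ) : ℝ :=
  -2 * ∑ i ∈ Finset.univ.filter (fun i => cbar i ≠ 0),
    (cbar i) ^ 2 * ((lam i) ^ 2 / (lam i * β - 1) ^ 3)

open Classical in
/-- First derivative. -/
def ellFun' {n : ℕ} (lam cbar : Fin n → ℝ) (β : ℝ) : ℝ :=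
  -1 + ∑ i ∈ Finset.univ.filter (fun i => cbar i ≠ 0),
    (cbar i) ^ 2 * (lam i / (lam i * β - 1) ^ 2)

lemma lamMin_pos {n : ℕ} (hn : 1 ≤ n) (lam : Fin n → ℝ) (hlam : ∀ i, 0 < lam i) :
    0 < lamMin hn lam :=
  Finset.lt_inf'_iff _ |>.mpr fun i _ => hlam i

lemma lamMin_le {n : ℕ} (hn : 1 ≤ n) (lam : Fin n → ℝ) (i : Fin n) :
    lamMin hn lam ≤ lam i :=
  Finset.inf'_le _ (Finset.mem_univ i)

lemma denom_pos {n : ℕ} (hn : 1 ≤ n) (lam : Fin n → ℝ) (hlam : ∀ i, 0 < lam i)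
    {β : ℝ} (hβ : 1 / lamMin hn lam < β) (i : Fin n) : 0 < lam i * β - 1 := by
  have h0 := lamMin_pos hn lam hlam
  have h1 : 1 < lamMin hn lam * β := by
    rw [div_lt_iff₀ h0] at hβ; linarith [hβ]
  have hβ0 : 0 < β := by
    rcases le_or_gt β 0 with h | h
    · nlinarith
    · exact h
  have h2 : lamMin hn lam * β ≤ lam i * β :=
    mul_le_mul_of_nonneg_right (lamMin_le hn lam i) hβ0.le
  linarith

lemma ellFun_hasDeriv {n : ℕ} (hn : 1 ≤ n) (lam cbar : Fin n → ℝ) (hlam : ∀ i, 0 < lam i)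
    {β : ℝ} (hβ : 1 / lamMin hn lam < β) :
    HasDerivAt (ellFun lam cbar) (ellFun' lam cbar β) β := by
  classical
  have hd := fun i => (denom_pos hn lam hlam hβ i).ne'
  have hterm : ∀ i ∈ Finset.univ.filter (fun i => cbar i ≠ 0),
      HasDerivAt (fun x => (cbar i) ^ 2 * (lam i * x / (lam i * x - 1)))
        (-((cbar i) ^ 2 * (lam i / (lam i * β - 1) ^ 2))) β := by
    intro i _
    have hnum : HasDerivAt (fun x : ℝ => lam i * x) (lam i) β := by
      simpa using (hasDerivAt_id β).const_mul (lam i)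
    have hden : HasDerivAt (fun x : ℝ => lam i * x - 1) (lam i) β := hnum.sub_const 1
    have := (hnum.div hden (hd i)).const_mul ((cbar i) ^ 2)
    refine this.congr_deriv ?_
    field_simp
    ring
  have hsum := HasDerivAt.fun_sum hterm
  have : HasDerivAt (fun x => -x - ∑ i ∈ Finset.univ.filter (fun i => cbar i ≠ 0),
      (cbar i) ^ 2 * (lam i * x / (lam i * x - 1)))
      (-1 - ∑ i ∈ Finset.univ.filter (fun i => cbar i ≠ 0),
        -((cbar i) ^ 2 * (lam i / (lam i * β - 1) ^ 2))) β :=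
    ((hasDerivAt_id β).neg).sub hsum
  have heq : ellFun' lam cbar β = -1 - ∑ i ∈ Finset.univ.filter (fun i => cbar i ≠ 0),
      -((cbar i) ^ 2 * (lam i / (lam i * β - 1) ^ 2)) := by
    rw [ellFun', Finset.sum_neg_distrib]; ring
  rw [heq]
  exact this

lemma ellFun'_hasDeriv {n : ℕ} (hn : 1 ≤ n) (lam cbar : Fin n → ℝ) (hlam : ∀ i, 0 < lam i)
    {β : ℝ} (hβ : 1 / lamMin hn lam < β) :
    HasDerivAt (ellFun' lam cbar) (ellFun'' lam cbar β) β := by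
  classical
  have hd := fun i => (denom_pos hn lam hlam hβ i).ne'
  have hterm : ∀ i ∈ Finset.univ.filter (fun i => cbar i ≠ 0),
      HasDerivAt (fun x => (cbar i) ^ 2 * (lam i / (lam i * x - 1) ^ 2))
        (-2 * ((cbar i) ^ 2 * ((lam i) ^ 2 / (lam i * β - 1) ^ 3))) β := by
    intro i _
    have hden : HasDerivAt (fun x : ℝ => lam i * x - 1) (lam i) β := by
      simpa using ((hasDerivAt_id β).const_mul (lam i)).sub_const 1
    have hden2 : HasDerivAt (fun x : ℝ => (lam i * x - 1) ^ 2)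
        ((2 : ℕ) * (lam i * β - 1) ^ 1 * lam i) β := hden.pow 2
    have hne2 : (lam i * β - 1) ^ 2 ≠ 0 := pow_ne_zero 2 (hd i)
    have hne : lam i * β - 1 ≠ 0 := hd i
    have := ((hasDerivAt_const β (lam i)).div hden2 hne2).const_mul ((cbar i) ^ 2)
    refine this.congr_deriv ?_
    field_simp
    ring
  have hsum := HasDerivAt.fun_sum hterm
  have : HasDerivAt (ellFun' lam cbar)
      (∑ i ∈ Finset.univ.filter (fun i => cbar i ≠ 0),
        -2 * ((cbar i) ^ 2 * ((lam i) ^ 2 / (lam i * β - 1) ^ 3))) β := by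
    rw [show ellFun' lam cbar = _ from funext fun x => ellFun'.eq_1 lam cbar x]
    simpa [ellFun'] using (hasDerivAt_const β (-1 : ℝ)).fun_add hsum
  have heq : ellFun'' lam cbar β = ∑ i ∈ Finset.univ.filter (fun i => cbar i ≠ 0),
      -2 * ((cbar i) ^ 2 * ((lam i) ^ 2 / (lam i * β - 1) ^ 3)) := by
    rw [ellFun'', Finset.mul_sum]
  rw [heq]
  exact this

lemma ellFun''_mono {n : ℕ} (hn : 1 ≤ n) (lam cbar : Fin n → ℝ) (hlam : ∀ i, 0 < lam i)
    {l x : ℝ} (hl : 1 / lamMin hn lam < l) (hx : l ≤ x) :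
    ellFun'' lam cbar l ≤ ellFun'' lam cbar x := by
  classical
  rw [ellFun'', ellFun'']
  have hsum : ∑ i ∈ Finset.univ.filter (fun i => cbar i ≠ 0),
      (cbar i) ^ 2 * ((lam i) ^ 2 / (lam i * x - 1) ^ 3) ≤
      ∑ i ∈ Finset.univ.filter (fun i => cbar i ≠ 0),
      (cbar i) ^ 2 * ((lam i) ^ 2 / (lam i * l - 1) ^ 3) := by
    apply Finset.sum_le_sum
    intro i _
    have h1 := denom_pos hn lam hlam hl i
    have h2 : lam i * l - 1 ≤ lam i * x - 1 := by
      have := (hlam i).le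
      nlinarith
    gcongr
  nlinarith [hsum]

lemma ellFun''_nonpos {n : ℕ} (hn : 1 ≤ n) (lam cbar : Fin n → ℝ) (hlam : ∀ i, 0 < lam i)
    {l : ℝ} (hl : 1 / lamMin hn lam < l) : ellFun'' lam cbar l ≤ 0 := by
  classical
  rw [ellFun'']
  have : 0 ≤ ∑ i ∈ Finset.univ.filter (fun i => cbar i ≠ 0),
      (cbar i) ^ 2 * ((lam i) ^ 2 / (lam i * l - 1) ^ 3) := by
    apply Finset.sum_nonneg
    intro i _
    have := denom_pos hn lam hlam hl i
    positivity
  linarith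

theorem stmt_19 {n : ℕ} (hn : 1 ≤ n) (lam cbar : Fin n → ℝ) (hlam : ∀ i, 0 < lam i)
    (hS : ∃ i, cbar i ≠ 0)
    (l u : ℝ) (hl : 1 / lamMin hn lam < l) (hlu : l ≤ u)
    (βs : ℝ) (hβs : βs ∈ Set.Icc l u)
    (hmax : ∀ β ∈ Set.Ioi (1 / lamMin hn lam), ellFun lam cbar β ≤ ellFun lam cbar βs) :
    ∀ β ∈ Set.Icc l u,
      ellFun lam cbar β ≤ ellFun lam cbar βs ∧
      ellFun lam cbar βs ≤ ellFun lam cbar β - ellFun'' lam cbar l / 2 * (u - l) ^ 2 := by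
  classical
  set m := 1 / lamMin hn lam with hm
  have hβsm : m < βs := lt_of_lt_of_le hl hβs.1
  set L := -(ellFun'' lam cbar l) with hLdef
  have hL : 0 ≤ L := by
    have := ellFun''_nonpos hn lam cbar hlam hl; linarith
  set h := fun x : ℝ => ellFun lam cbar x + L / 2 * (x - βs) ^ 2 with hh
  set h' := fun x : ℝ => ellFun' lam cbar x + L * (x - βs) with hh'
  have hdh : ∀ x, m < x → HasDerivAt h (h' x) x := by
    intro x hx
    have h1 := ellFun_hasDeriv hn lam cbar hlam hx
    have h2 : HasDerivAt (fun y : ℝ => L / 2 * (y - βs) ^ 2) (L * (x - βs)) x := by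
      have := (((hasDerivAt_id x).sub_const βs).pow 2).const_mul (L / 2)
      refine this.congr_deriv ?_
      simp only [id_eq]
      push_cast
      ring
    exact h1.add h2
  have hdh' : ∀ x, m < x → HasDerivAt h' (ellFun'' lam cbar x + L) x := by
    intro x hx
    have h1 := ellFun'_hasDeriv hn lam cbar hlam hx
    have h2 : HasDerivAt (fun y : ℝ => L * (y - βs)) L x := by
      simpa using ((hasDerivAt_id x).sub_const βs).const_mul L
    exact h1.add h2
  have hmono' : MonotoneOn h' (Set.Icc l u) := by
    apply monotoneOn_of_deriv_nonneg (convex_Icc l u)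
    · intro x hx
      exact (hdh' x (lt_of_lt_of_le hl hx.1)).continuousAt.continuousWithinAt
    · intro x hx
      rw [interior_Icc] at hx
      exact (hdh' x (lt_of_lt_of_le hl hx.1.le)).differentiableAt.differentiableWithinAt
    · intro x hx
      rw [interior_Icc] at hx
      rw [(hdh' x (lt_of_lt_of_le hl hx.1.le)).deriv]
      have := ellFun''_mono hn lam cbar hlam hl hx.1.le
      simp only [hLdef]
      linarith
  have hβs0 : h' βs = 0 := by
    have hmaxon : IsMaxOn (ellFun lam cbar) (Set.Ioi m) βs := fun β hβ => hmax β hβ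
    have hlm : IsLocalMax (ellFun lam cbar) βs :=
      hmaxon.isLocalMax (isOpen_Ioi.mem_nhds hβsm)
    have hd0 := hlm.hasDerivAt_eq_zero (ellFun_hasDeriv hn lam cbar hlam hβsm)
    simp [hh', hd0]
  intro β hβ
  have hβm : m < β := lt_of_lt_of_le hl hβ.1
  refine ⟨hmax β hβm, ?_⟩
  have key : h βs ≤ h β := by
    rcases le_total β βs with hc | hc
    · have hanti : AntitoneOn h (Set.Icc l βs) := by
        apply antitoneOn_of_deriv_nonpos (convex_Icc l βs)
        · intro x hx
          exact (hdh x (lt_of_lt_of_le hl hx.1)).continuousAt.continuousWithinAt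
        · intro x hx
          rw [interior_Icc] at hx
          exact (hdh x (lt_of_lt_of_le hl hx.1.le)).differentiableAt.differentiableWithinAt
        · intro x hx
          rw [interior_Icc] at hx
          rw [(hdh x (lt_of_lt_of_le hl hx.1.le)).deriv]
          have := hmono' ⟨hx.1.le, le_trans hx.2.le hβs.2⟩ hβs hx.2.le
          linarith [hβs0]
      exact hanti ⟨hβ.1, hc⟩ ⟨hβs.1, le_refl _⟩ hc
    · have hmono : MonotoneOn h (Set.Icc βs u) := by
        apply monotoneOn_of_deriv_nonneg (convex_Icc βs u)
        · intro x hx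
          exact (hdh x (lt_of_lt_of_le hβsm hx.1)).continuousAt.continuousWithinAt
        · intro x hx
          rw [interior_Icc] at hx
          exact (hdh x (lt_of_lt_of_le hβsm hx.1.le)).differentiableAt.differentiableWithinAt
        · intro x hx
          rw [interior_Icc] at hx
          rw [(hdh x (lt_of_lt_of_le hβsm hx.1.le)).deriv]
          have := hmono' hβs ⟨le_trans hβs.1 hx.1.le, hx.2.le⟩ hx.1.le
          linarith [hβs0]
      exact hmono ⟨le_refl _, hβs.2⟩ ⟨hc, hβ.2⟩ hc
  have hsq : (β - βs) ^ 2 ≤ (u - l) ^ 2 := by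
    apply sq_le_sq'
    · linarith [hβ.1, hβs.2]
    · linarith [hβ.2, hβs.1]
  have hfin : L / 2 * (β - βs) ^ 2 ≤ L / 2 * (u - l) ^ 2 := by
    apply mul_le_mul_of_nonneg_left hsq
    linarith
  have h1 : h βs = ellFun lam cbar βs := by simp [hh]
  have h2 : h β = ellFun lam cbar β + L / 2 * (β - βs) ^ 2 := rfl
  rw [h1, h2] at key
  simp only [hLdef] at hfin ⊢
  linarith
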